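/- Every Reiter extension arises from a closed generating sequence: if Φ is a set of DAL formulas, Δ a set of normal defaults, and E is a Reiter extension of Φ under Δ, then there exists a closed generating sequence s of defaults of Δ for Φ such that E = Cn(Φ ∪ Cons_s). -/

import Mathlib

namespace DAL

/-- Actions of DAL over a countable set of basic action symbols. -/
inductive Act : Type where
  | basic : ℕ → Act
  | join : Act → Act → Act
  | meet : Act → Act → Act
  | compl : Act → Act
  | zero : Act
  | one : Act

/-- Formulas of DAL. -/
inductive Fml : Type where
  | neg : Fml → Fml
  | or : Fml → Fml → Fml
  | eq : Act → Act → Fml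
  | perm : Act → Fml
  | forb : Act → Fml

/-- Material implication, defined from ¬ and ∨. -/
def fImp (p q : Fml) : Fml := .or (.neg p) q
/-- Conjunction, defined from ¬ and ∨. -/
def fAnd (p q : Fml) : Fml := .neg (.or (.neg p) (.neg q))
/-- Biconditional. -/
def fIff (p q : Fml) : Fml := fAnd (fImp p q) (fImp q p)
/-- Verum. -/
def fTop : Fml := .or (.eq .zero .zero) (.neg (.eq .zero .zero))
/-- Falsum. -/
def fBot : Fml := .neg fTop

/-- `ARepl a b γ γ'` : γ' is obtained from γ by replacing some (possibly zero)
occurrences of the action `a` with the action `b`. -/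
inductive ARepl (a b : Act) : Act → Act → Prop where
  | repl : ARepl a b a b
  | basic (n : ℕ) : ARepl a b (.basic n) (.basic n)
  | zero : ARepl a b .zero .zero
  | one : ARepl a b .one .one
  | join {x x' y y'} : ARepl a b x x' → ARepl a b y y' → ARepl a b (.join x y) (.join x' y')
  | meet {x x' y y'} : ARepl a b x x' → ARepl a b y y' → ARepl a b (.meet x y) (.meet x' y')
  | compl {x x'} : ARepl a b x x' → ARepl a b (.compl x) (.compl x')

/-- `FRepl a b φ φ'` : φ' is obtained from φ by replacing some (possibly zero)
occurrences of the action `a` with the action `b`. -/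
inductive FRepl (a b : Act) : Fml → Fml → Prop where
  | neg {p p'} : FRepl a b p p' → FRepl a b (.neg p) (.neg p')
  | or {p p' q q'} : FRepl a b p p' → FRepl a b q q' → FRepl a b (.or p q) (.or p' q')
  | eq {x x' y y'} : ARepl a b x x' → ARepl a b y y' → FRepl a b (.eq x y) (.eq x' y')
  | perm {x x'} : ARepl a b x x' → FRepl a b (.perm x) (.perm x')
  | forb {x x'} : ARepl a b x x' → FRepl a b (.forb x) (.forb x')

/-- The axioms of the Hilbert system for DAL: a complete classical axiomatization of
¬, ∨; Boolean algebra axioms for actions plus ¬(0=1); equality and substitution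
axioms; and the deontic axioms D1, D2, D3. -/
inductive Ax : Fml → Prop where
  -- classical axioms for ¬ and ∨ (Principia Mathematica style)
  | pl1 (p : Fml) : Ax (fImp (.or p p) p)
  | pl2 (p q : Fml) : Ax (fImp p (.or p q))
  | pl3 (p q : Fml) : Ax (fImp (.or p q) (.or q p))
  | pl4 (p q r : Fml) : Ax (fImp (fImp p q) (fImp (.or r p) (.or r q)))
  -- Boolean algebra axioms for actions
  | joinComm (x y : Act) : Ax (.eq (.join x y) (.join y x))
  | meetComm (x y : Act) : Ax (.eq (.meet x y) (.meet y x))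
  | joinAssoc (x y z : Act) : Ax (.eq (.join x (.join y z)) (.join (.join x y) z))
  | meetAssoc (x y z : Act) : Ax (.eq (.meet x (.meet y z)) (.meet (.meet x y) z))
  | joinDistrib (x y z : Act) : Ax (.eq (.join x (.meet y z)) (.meet (.join x y) (.join x z)))
  | meetDistrib (x y z : Act) : Ax (.eq (.meet x (.join y z)) (.join (.meet x y) (.meet x z)))
  | joinZero (x : Act) : Ax (.eq (.join x .zero) x)
  | meetOne (x : Act) : Ax (.eq (.meet x .one) x)
  | joinCompl (x : Act) : Ax (.eq (.join x (.compl x)) .one)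
  | meetCompl (x : Act) : Ax (.eq (.meet x (.compl x)) .zero)
  | nondeg : Ax (.neg (.eq .zero .one))
  -- equality axioms
  | eqRefl (x : Act) : Ax (.eq x x)
  | eqSymm (x y : Act) : Ax (fImp (.eq x y) (.eq y x))
  | eqTrans (x y z : Act) : Ax (fImp (.eq x y) (fImp (.eq y z) (.eq x z)))
  -- substitution axiom
  | subst {x y : Act} {p q : Fml} : FRepl x y p q → Ax (fImp (.eq x y) (fImp p q))
  -- deontic axioms
  | d1 (x y : Act) : Ax (fIff (.perm (.join x y)) (fAnd (.perm x) (.perm y)))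
  | d2 (x y : Act) : Ax (fIff (.forb (.join x y)) (fAnd (.forb x) (.forb y)))
  | d3 (x : Act) : Ax (fIff (.eq x .zero) (fAnd (.perm x) (.forb x)))

/-- `IsProof Φ s` : the finite sequence (list) `s` is a proof from `Φ`: every member
is an axiom, a member of `Φ`, or follows from two earlier members by modus ponens. -/
def IsProof (Φ : Set Fml) (s : List Fml) : Prop :=
  ∀ (k : ℕ) (hk : k < s.length),
    Ax (s[k]'hk) ∨ (s[k]'hk) ∈ Φ ∨
      ∃ (i j : ℕ) (hi : i < k) (hj : j < k),
        s[j]'(Nat.lt_trans hj hk) = fImp (s[i]'(Nat.lt_trans hi hk)) (s[k]'hk)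

/-- `Prov Φ φ` (Φ ⊢ φ) : there is a proof of φ from Φ. -/
def Prov (Φ : Set Fml) (φ : Fml) : Prop :=
  ∃ s : List Fml, IsProof Φ s ∧ s.getLast? = some φ

/-- Φ is ⊢-consistent. -/
def Consistent (Φ : Set Fml) : Prop := ¬ Prov Φ fBot

/-- Deductive closure. -/
def Cn (Ψ : Set Fml) : Set Fml := {φ | Prov Ψ φ}

end DAL

namespace DAL

/-- A default π:ρ/χ with prerequisite, justification, and consequent. -/
structure Default : Type where
  pre : Fml
  jus : Fml
  con : Fml

/-- A default is normal iff its justification equals its consequent. -/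
def Default.Normal (d : Default) : Prop := d.jus = d.con

/-- The operator Γ^Φ_Δ : `GammaSet Φ Δ Ψ` is the smallest set `X` of formulas such
that (i) Φ ⊆ X, (ii) X is deductively closed, and (iii) for each default π:ρ/χ in Δ,
if π ∈ X and ¬ρ ∉ Ψ then χ ∈ X. -/
def GammaSet (Φ : Set Fml) (Δ : Set Default) (Ψ : Set Fml) : Set Fml :=
  ⋂₀ {X | Φ ⊆ X ∧ X = Cn X ∧ ∀ d ∈ Δ, d.pre ∈ X → Fml.neg d.jus ∉ Ψ → d.con ∈ X}

/-- `E` is a Reiter extension of Φ under Δ iff it is a fixed point of Γ^Φ_Δ. -/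
def IsExtension (Φ : Set Fml) (Δ : Set Default) (E : Set Fml) : Prop :=
  E = GammaSet Φ Δ E

/-- Default consequence (Φ |≈_Δ φ): some Reiter extension E of Φ under Δ
satisfies E ⊢ φ. -/
def DCons (Φ : Set Fml) (Δ : Set Default) (φ : Fml) : Prop :=
  ∃ E, IsExtension Φ Δ E ∧ Prov E φ

/-- One step of a default proof: an axiom, a member of Φ, modus ponens from two
earlier members, or default detachment from an earlier member. -/
def DProofStep (Φ : Set Fml) (Δ : Set Default) (s : List Fml) (k : ℕ) (hk : k < s.length) : Prop :=
  Ax (s[k]'hk) ∨ (s[k]'hk) ∈ Φ ∨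
    (∃ (i j : ℕ) (hi : i < k) (hj : j < k),
      s[j]'(Nat.lt_trans hj hk) = fImp (s[i]'(Nat.lt_trans hi hk)) (s[k]'hk)) ∨
    (∃ (j : ℕ) (hj : j < k),
      (⟨s[j]'(Nat.lt_trans hj hk), s[k]'hk, s[k]'hk⟩ : Default) ∈ Δ)

/-- Default provability (Φ ⊢_Δ φ): there is a finite sequence ψ₁,…,ψₙ with ψₙ = φ,
each member an axiom, a member of Φ, obtained by modus ponens, or obtained by
default detachment, such that {ψ₁,…,ψₙ} is ⊢-consistent. -/
def DProv (Φ : Set Fml) (Δ : Set Default) (φ : Fml) : Prop :=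
  ∃ s : List Fml,
    (∀ (k : ℕ) (hk : k < s.length), DProofStep Φ Δ s k hk) ∧
    s.getLast? = some φ ∧
    Consistent {ψ | ψ ∈ s}

end DAL

namespace DAL

/-- A (potentially infinite) sequence of defaults, represented as a partial function
on ℕ whose domain is downward closed. -/
structure DSeq : Type where
  f : ℕ → Option Default
  dc : ∀ m n : ℕ, m ≤ n → f m = none → f n = none

/-- Cons_{s|_n}: the set of consequents of the first `n` defaults of `s`. -/
def consUpTo (s : DSeq) (n : ℕ) : Set Fml :=
  {χ | ∃ i < n, ∃ d : Default, s.f i = some d ∧ d.con = χ}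

/-- Cons_s: the set of consequents of all the defaults of `s`. -/
def consAll (s : DSeq) : Set Fml :=
  {χ | ∃ i : ℕ, ∃ d : Default, s.f i = some d ∧ d.con = χ}

/-- `s` is a generating sequence of defaults of Δ for Φ: every entry is a default
of Δ whose prerequisite is provable from Φ together with the consequents of the
previous entries, and Φ together with the consequents up to (and including) each
entry is ⊢-consistent. -/
def Generating (Φ : Set Fml) (Δ : Set Default) (s : DSeq) : Prop :=
  ∀ (i : ℕ) (d : Default), s.f i = some d →
    d ∈ Δ ∧ Prov (Φ ∪ consUpTo s i) d.pre ∧ Consistent (Φ ∪ consUpTo s (i + 1))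

/-- `s` is a strict initial segment of `t`. -/
def StrictInit (s t : DSeq) : Prop :=
  (∀ (n : ℕ) (d : Default), s.f n = some d → t.f n = some d) ∧
  (∃ n : ℕ, s.f n = none ∧ t.f n ≠ none)

/-- A generating sequence is closed iff it is not a strict initial segment of any
other generating sequence. -/
def ClosedGen (Φ : Set Fml) (Δ : Set Default) (s : DSeq) : Prop :=
  Generating Φ Δ s ∧ ∀ t : DSeq, Generating Φ Δ t → ¬ StrictInit s t

end DAL
namespace DAL

lemma getLast?_spec {l : List Fml} {φ : Fml} (h : l.getLast? = some φ) :
    ∃ hl : l.length - 1 < l.length, l[l.length - 1]'hl = φ := by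
  rw [List.getLast?_eq_getElem?] at h
  rcases List.getElem?_eq_some_iff.mp h with ⟨hl, he⟩
  exact ⟨hl, he⟩

lemma prov_of_ax {Ψ : Set Fml} {φ : Fml} (h : Ax φ) : Prov Ψ φ := by
  refine ⟨[φ], ?_, rfl⟩
  intro k hk
  have : k = 0 := by simpa using hk
  subst this
  exact Or.inl h

lemma prov_of_mem {Ψ : Set Fml} {φ : Fml} (h : φ ∈ Ψ) : Prov Ψ φ := by
  refine ⟨[φ], ?_, rfl⟩
  intro k hk
  have : k = 0 := by simpa using hk
  subst this
  exact Or.inr (Or.inl h)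

lemma prov_mp {Ψ : Set Fml} {p q : Fml} (hp : Prov Ψ p) (hpq : Prov Ψ (fImp p q)) :
    Prov Ψ q := by
  obtain ⟨s, hs, hsl⟩ := hp
  obtain ⟨t, ht, htl⟩ := hpq
  obtain ⟨hs1, hs2⟩ := getLast?_spec hsl
  obtain ⟨ht1, ht2⟩ := getLast?_spec htl
  have hs0 : 0 < s.length := by omega
  have ht0 : 0 < t.length := by omega
  refine ⟨s ++ t ++ [q], ?_, by simp⟩
  have hlen : (s ++ t ++ [q]).length = s.length + t.length + 1 := by
    simp [Nat.add_assoc]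
  have hget1 : ∀ (k : ℕ) (hk : k < s.length) (hk' : k < (s ++ t ++ [q]).length),
      (s ++ t ++ [q])[k]'hk' = s[k]'hk := by
    intro k hk hk'
    rw [List.getElem_append_left (h' := hk') (by simpa using by omega),
      List.getElem_append_left hk]
  have hget2 : ∀ (k : ℕ) (h1 : s.length ≤ k) (h2 : k < s.length + t.length)
      (hk' : k < (s ++ t ++ [q]).length),
      (s ++ t ++ [q])[k]'hk' = t[k - s.length]'(by omega) := by
    intro k h1 h2 hk'
    rw [List.getElem_append_left (h' := hk') (by simpa using by omega),
      List.getElem_append_right (by omega)]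
  have hget3 : ∀ (hk' : s.length + t.length < (s ++ t ++ [q]).length),
      (s ++ t ++ [q])[s.length + t.length]'hk' = q := by
    intro hk'
    rw [List.getElem_append_right (by simp)]
    simp
  intro k hk
  rcases lt_trichotomy k s.length with hks | hks
  · rw [hget1 k hks]
    rcases hs k hks with h | h | ⟨i, j, hi, hj, he⟩
    · exact Or.inl h
    · exact Or.inr (Or.inl h)
    · refine Or.inr (Or.inr ⟨i, j, hi, hj, ?_⟩)
      rw [hget1 i (by omega), hget1 j (by omega)]
      exact he
  · have hkle : k < s.length + t.length + 1 := by omega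
    rcases Nat.lt_or_ge k (s.length + t.length) with hk2 | hk2
    · have h1 : s.length ≤ k := le_of_not_gt (by omega)
      rw [hget2 k h1 hk2]
      rcases ht (k - s.length) (by omega) with h | h | ⟨i, j, hi, hj, he⟩
      · exact Or.inl h
      · exact Or.inr (Or.inl h)
      · refine Or.inr (Or.inr ⟨i + s.length, j + s.length, by omega, by omega, ?_⟩)
        rw [hget2 (i + s.length) (by omega) (by omega),
          hget2 (j + s.length) (by omega) (by omega)]
        simpa using he
    · have hke : k = s.length + t.length := by omega
      subst hke
      refine Or.inr (Or.inr ⟨s.length - 1, s.length + t.length - 1, by omega, by omega, ?_⟩)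
      rw [hget3, hget1 (s.length - 1) (by omega),
        hget2 (s.length + t.length - 1) (by omega) (by omega)]
      have : s.length + t.length - 1 - s.length = t.length - 1 := by omega
      simp only [this, hs2, ht2]

end DAL
namespace DAL

/-- Inductive derivability, equivalent to `Prov`. -/
inductive Deriv (Ψ : Set Fml) : Fml → Prop
  | ax {φ} : Ax φ → Deriv Ψ φ
  | mem {φ} : φ ∈ Ψ → Deriv Ψ φ
  | mp {p q} : Deriv Ψ p → Deriv Ψ (fImp p q) → Deriv Ψ q

lemma Deriv.prov {Ψ : Set Fml} {φ : Fml} (h : Deriv Ψ φ) : Prov Ψ φ := by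
  induction h with
  | ax h => exact prov_of_ax h
  | mem h => exact prov_of_mem h
  | mp _ _ ih1 ih2 => exact prov_mp ih1 ih2

lemma Prov.deriv {Ψ : Set Fml} {φ : Fml} (h : Prov Ψ φ) : Deriv Ψ φ := by
  obtain ⟨l, hl, hlast⟩ := h
  obtain ⟨h1, h2⟩ := getLast?_spec hlast
  have key : ∀ k, ∀ (hk : k < l.length), Deriv Ψ (l[k]'hk) := by
    intro k
    induction k using Nat.strong_induction_on with
    | _ k ih =>
      intro hk
      rcases hl k hk with h | h | ⟨i, j, hi, hj, he⟩
      · exact .ax h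
      · exact .mem h
      · exact .mp (ih i hi _) (he ▸ ih j hj _)
  exact h2 ▸ key _ h1

lemma prov_iff_deriv {Ψ : Set Fml} {φ : Fml} : Prov Ψ φ ↔ Deriv Ψ φ :=
  ⟨Prov.deriv, Deriv.prov⟩

lemma deriv_mono {Ψ Ψ' : Set Fml} (hss : Ψ ⊆ Ψ') {φ : Fml} (h : Deriv Ψ φ) :
    Deriv Ψ' φ := by
  induction h with
  | ax h => exact .ax h
  | mem h => exact .mem (hss h)
  | mp _ _ ih1 ih2 => exact .mp ih1 ih2

lemma deriv_cut {Ψ Ψ' : Set Fml} {φ : Fml} (h : Deriv Ψ' φ)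
    (hcut : ∀ ψ ∈ Ψ', Deriv Ψ ψ) : Deriv Ψ φ := by
  induction h with
  | ax h => exact .ax h
  | mem h => exact hcut _ h
  | mp _ _ ih1 ih2 => exact .mp ih1 ih2

lemma mem_cn {Ψ : Set Fml} {φ : Fml} : φ ∈ Cn Ψ ↔ Deriv Ψ φ := prov_iff_deriv

lemma subset_cn {Ψ : Set Fml} : Ψ ⊆ Cn Ψ := fun _ h => mem_cn.mpr (.mem h)

lemma cn_mono {Ψ Ψ' : Set Fml} (h : Ψ ⊆ Ψ') : Cn Ψ ⊆ Cn Ψ' := by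
  intro φ hφ
  exact mem_cn.mpr (deriv_mono h (mem_cn.mp hφ))

lemma cn_cn {Ψ : Set Fml} : Cn (Cn Ψ) = Cn Ψ := by
  apply Set.Subset.antisymm _ subset_cn
  intro φ hφ
  exact mem_cn.mpr (deriv_cut (mem_cn.mp hφ) (fun ψ hψ => mem_cn.mp hψ))

lemma cn_univ : Cn (Set.univ : Set Fml) = Set.univ :=
  Set.eq_univ_of_univ_subset subset_cn

lemma deriv_chain {C : ℕ → Set Fml} (hmono : ∀ ⦃m n : ℕ⦄, m ≤ n → C m ⊆ C n) {φ : Fml}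
    (h : Deriv (⋃ n, C n) φ) : ∃ n, Deriv (C n) φ := by
  induction h with
  | ax h => exact ⟨0, .ax h⟩
  | mem h =>
    obtain ⟨_, ⟨n, rfl⟩, hn⟩ := h
    exact ⟨n, .mem hn⟩
  | mp _ _ ih1 ih2 =>
    obtain ⟨n1, h1⟩ := ih1
    obtain ⟨n2, h2⟩ := ih2
    exact ⟨max n1 n2, .mp (deriv_mono (hmono (le_max_left n1 n2)) h1)
      (deriv_mono (hmono (le_max_right n1 n2)) h2)⟩

lemma consistent_mono {Ψ Ψ' : Set Fml} (hss : Ψ ⊆ Ψ') (h : Consistent Ψ') :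
    Consistent Ψ := fun hb => h (Deriv.prov (deriv_mono hss hb.deriv))

lemma deriv_fTop (Ψ : Set Fml) : Deriv Ψ fTop := by
  set q : Fml := .eq .zero .zero with hq
  have a1 : Deriv Ψ (fImp q (.or q q)) := .ax (Ax.pl2 q q)
  have a2 : Deriv Ψ (fImp (.or q q) q) := .ax (Ax.pl1 q)
  have syl : Deriv Ψ (fImp (fImp (.or q q) q) (fImp (fImp q (.or q q)) (fImp q q))) :=
    .ax (Ax.pl4 (.or q q) q (.neg q))
  have t1 : Deriv Ψ (fImp (fImp q (.or q q)) (fImp q q)) := .mp a2 syl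
  have t2 : Deriv Ψ (fImp q q) := .mp a1 t1
  have t3 : Deriv Ψ (fImp (.or (.neg q) q) (.or q (.neg q))) := .ax (Ax.pl3 (.neg q) q)
  exact .mp t2 t3

lemma not_consistent_of_contra {Ψ : Set Fml} {φ : Fml} (hφ : Deriv Ψ φ)
    (hn : Deriv Ψ (.neg φ)) : ¬ Consistent Ψ := fun hc =>
  hc (Deriv.prov (.mp hφ (.mp hn (.ax (Ax.pl2 (.neg φ) fBot)))))

lemma deriv_of_not_consistent {Ψ : Set Fml} (h : ¬ Consistent Ψ) (p : Fml) :
    Deriv Ψ p := by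
  have hb : Deriv Ψ fBot := (not_not.mp h).deriv
  exact .mp (deriv_fTop Ψ) (.mp hb (.ax (Ax.pl2 (.neg fTop) p)))

end DAL
namespace DAL

/-- The family whose intersection is `GammaSet`. -/
def Fam (Φ : Set Fml) (Δ : Set Default) (Ψ : Set Fml) : Set (Set Fml) :=
  {X | Φ ⊆ X ∧ X = Cn X ∧ ∀ d ∈ Δ, d.pre ∈ X → Fml.neg d.jus ∉ Ψ → d.con ∈ X}

lemma gammaSet_eq_sInter (Φ : Set Fml) (Δ : Set Default) (Ψ : Set Fml) :
    GammaSet Φ Δ Ψ = ⋂₀ Fam Φ Δ Ψ := rfl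

lemma univ_mem_fam (Φ : Set Fml) (Δ : Set Default) (Ψ : Set Fml) :
    Set.univ ∈ Fam Φ Δ Ψ :=
  ⟨Set.subset_univ _, cn_univ.symm, fun _ _ _ _ => trivial⟩

lemma gammaSet_mem_fam (Φ : Set Fml) (Δ : Set Default) (Ψ : Set Fml) :
    GammaSet Φ Δ Ψ ∈ Fam Φ Δ Ψ := by
  refine ⟨?_, ?_, ?_⟩
  · intro φ hφ
    exact Set.mem_sInter.mpr fun X hX => hX.1 hφ
  · apply Set.Subset.antisymm subset_cn
    intro φ hφ
    refine Set.mem_sInter.mpr fun X hX => ?_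
    have : Cn (GammaSet Φ Δ Ψ) ⊆ Cn X := cn_mono (Set.sInter_subset_of_mem hX)
    rw [← hX.2.1] at this
    exact this hφ
  · intro d hd hpre hjus
    refine Set.mem_sInter.mpr fun X hX => ?_
    exact hX.2.2 d hd (Set.mem_sInter.mp hpre X hX) hjus

lemma gammaSet_subset {Φ : Set Fml} {Δ : Set Default} {Ψ X : Set Fml}
    (hX : X ∈ Fam Φ Δ Ψ) : GammaSet Φ Δ Ψ ⊆ X := Set.sInter_subset_of_mem hX

/-- Encoding of actions into ℕ. -/
def encA : Act → ℕ
  | .basic n => Nat.pair 0 n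
  | .join x y => Nat.pair 1 (Nat.pair (encA x) (encA y))
  | .meet x y => Nat.pair 2 (Nat.pair (encA x) (encA y))
  | .compl x => Nat.pair 3 (encA x)
  | .zero => Nat.pair 4 0
  | .one => Nat.pair 5 0

lemma encA_inj : ∀ x y : Act, encA x = encA y → x = y := by
  intro x
  induction x with
  | basic n =>
    intro y h; cases y <;> simp [encA, Nat.pair_eq_pair] at h
    rw [h]
  | join a b iha ihb =>
    intro y h; cases y <;> simp [encA, Nat.pair_eq_pair] at h
    rw [iha _ h.1, ihb _ h.2]
  | meet a b iha ihb =>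
    intro y h; cases y <;> simp [encA, Nat.pair_eq_pair] at h
    rw [iha _ h.1, ihb _ h.2]
  | compl a iha =>
    intro y h; cases y <;> simp [encA, Nat.pair_eq_pair] at h
    rw [iha _ h]
  | zero =>
    intro y h; cases y <;> simp [encA, Nat.pair_eq_pair] at h
    rfl
  | one =>
    intro y h; cases y <;> simp [encA, Nat.pair_eq_pair] at h
    rfl


/-- Encoding of formulas into ℕ. -/
def encF : Fml → ℕ
  | .neg p => Nat.pair 0 (encF p)
  | .or p q => Nat.pair 1 (Nat.pair (encF p) (encF q))
  | .eq x y => Nat.pair 2 (Nat.pair (encA x) (encA y))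
  | .perm x => Nat.pair 3 (encA x)
  | .forb x => Nat.pair 4 (encA x)

lemma encF_inj : ∀ p q : Fml, encF p = encF q → p = q := by
  intro p
  induction p with
  | neg a iha =>
    intro q h; cases q <;> simp [encF, Nat.pair_eq_pair] at h
    rw [iha _ h]
  | or a b iha ihb =>
    intro q h; cases q <;> simp [encF, Nat.pair_eq_pair] at h
    rw [iha _ h.1, ihb _ h.2]
  | eq x y =>
    intro q h; cases q <;> simp [encF, Nat.pair_eq_pair] at h
    rw [encA_inj _ _ h.1, encA_inj _ _ h.2]
  | perm x =>
    intro q h; cases q <;> simp [encF, Nat.pair_eq_pair] at h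
    rw [encA_inj _ _ h]
  | forb x =>
    intro q h; cases q <;> simp [encF, Nat.pair_eq_pair] at h
    rw [encA_inj _ _ h]


/-- Encoding of defaults into ℕ. -/
def encD (d : Default) : ℕ := Nat.pair (encF d.pre) (Nat.pair (encF d.jus) (encF d.con))

lemma encD_inj {d e : Default} (h : encD d = encD e) : d = e := by
  obtain ⟨p, j, c⟩ := d
  obtain ⟨p', j', c'⟩ := e
  simp only [encD, Nat.pair_eq_pair] at h
  simp only [Default.mk.injEq]
  exact ⟨encF_inj _ _ h.1, encF_inj _ _ h.2.1, encF_inj _ _ h.2.2⟩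

/-- Pick a `P`-default with minimal code. -/
lemma exists_min_default {P : Default → Prop} (h : ∃ d, P d) :
    ∃ d, P d ∧ ∀ e, P e → encD d ≤ encD e := by
  obtain ⟨d0, hd0⟩ := h
  have hne : (encD '' {d | P d}).Nonempty := ⟨encD d0, d0, hd0, rfl⟩
  obtain ⟨d, hd, hcode⟩ := Nat.sInf_mem hne
  refine ⟨d, hd, fun e he => ?_⟩
  rw [hcode]
  exact Nat.sInf_le ⟨e, he, rfl⟩

end DAL
namespace DAL

/-- A default is applicable relative to a set `C` of already-derived consequents. -/
def App (Φ : Set Fml) (Δ : Set Default) (E : Set Fml) (C : Set Fml) (d : Default) : Prop :=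
  d ∈ Δ ∧ Prov (Φ ∪ C) d.pre ∧ Fml.neg d.con ∉ E

open Classical in
/-- Pick the applicable default with fresh consequent of least code if one
exists, else any applicable default of least code, else nothing. -/
noncomputable def step (Φ : Set Fml) (Δ : Set Default) (E : Set Fml) (C : Set Fml) :
    Option Default :=
  if h : ∃ d, App Φ Δ E C d ∧ d.con ∉ C then
    some (Classical.choose (exists_min_default h))
  else if h2 : ∃ d, App Φ Δ E C d then
    some (Classical.choose (exists_min_default h2))
  else none

/-- The consequents accumulated during the first `n` steps. -/
noncomputable def stage (Φ : Set Fml) (Δ : Set Default) (E : Set Fml) : ℕ → Set Fml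
  | 0 => ∅
  | n + 1 => stage Φ Δ E n ∪
      {χ | ∃ d, step Φ Δ E (stage Φ Δ E n) = some d ∧ χ = d.con}

/-- The constructed sequence of defaults. -/
lemma stage_zero (Φ : Set Fml) (Δ : Set Default) (E : Set Fml) :
    stage Φ Δ E 0 = ∅ := rfl

lemma stage_succ (Φ : Set Fml) (Δ : Set Default) (E : Set Fml) (n : ℕ) :
    stage Φ Δ E (n + 1) = stage Φ Δ E n ∪
      {χ | ∃ d, step Φ Δ E (stage Φ Δ E n) = some d ∧ χ = d.con} := rfl

noncomputable def sf (Φ : Set Fml) (Δ : Set Default) (E : Set Fml) (n : ℕ) :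
    Option Default := step Φ Δ E (stage Φ Δ E n)

lemma step_some_app (Φ : Set Fml) (Δ : Set Default) (E : Set Fml) {C : Set Fml} {d : Default} (h : step Φ Δ E C = some d) :
    App Φ Δ E C d := by
  unfold step at h
  split_ifs at h with h1 h2
  · cases h
    exact (Classical.choose_spec (exists_min_default h1)).1.1
  · cases h
    exact (Classical.choose_spec (exists_min_default h2)).1

lemma step_ne_none (Φ : Set Fml) (Δ : Set Default) (E : Set Fml) {C : Set Fml} {d : Default} (h : App Φ Δ E C d) :
    step Φ Δ E C ≠ none := by
  unfold step
  split_ifs with h1 h2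
  · simp
  · simp
  · exact absurd ⟨d, h⟩ h2

lemma step_fresh (Φ : Set Fml) (Δ : Set Default) (E : Set Fml) {C : Set Fml} (h : ∃ d, App Φ Δ E C d ∧ d.con ∉ C) :
    ∃ e, step Φ Δ E C = some e ∧ App Φ Δ E C e ∧ e.con ∉ C ∧
      ∀ f, App Φ Δ E C f → f.con ∉ C → encD e ≤ encD f := by
  refine ⟨Classical.choose (exists_min_default h), ?_, ?_, ?_, ?_⟩
  · unfold step
    rw [dif_pos h]
  · exact (Classical.choose_spec (exists_min_default h)).1.1
  · exact (Classical.choose_spec (exists_min_default h)).1.2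
  · intro f hf hfc
    exact (Classical.choose_spec (exists_min_default h)).2 f ⟨hf, hfc⟩

lemma stage_mono (Φ : Set Fml) (Δ : Set Default) (E : Set Fml) : ∀ {m n : ℕ}, m ≤ n → stage Φ Δ E m ⊆ stage Φ Δ E n := by
  intro m n h
  induction n with
  | zero => cases Nat.le_zero.mp h; rfl
  | succ n ih =>
    rcases Nat.lt_or_ge m (n + 1) with h1 | h1
    · exact (ih (by omega)).trans (Set.subset_union_left)
    · have : m = n + 1 := by omega
      subst this; rfl

lemma sf_dc (Φ : Set Fml) (Δ : Set Default) (E : Set Fml) : ∀ m n : ℕ, m ≤ n → sf Φ Δ E m = none → sf Φ Δ E n = none := by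
  have key : ∀ m, sf Φ Δ E m = none → sf Φ Δ E (m + 1) = none := by
    intro m hm
    have : stage Φ Δ E (m + 1) = stage Φ Δ E m := by
      rw [stage_succ]
      have : {χ | ∃ d, step Φ Δ E (stage Φ Δ E m) = some d ∧ χ = d.con} = ∅ := by
        ext χ
        simp only [Set.mem_setOf_eq, Set.mem_empty_iff_false, iff_false, not_exists]
        intro d ⟨hd, _⟩
        rw [show step Φ Δ E (stage Φ Δ E m) = sf Φ Δ E m from rfl, hm] at hd
        cases hd
      rw [this, Set.union_empty]
    show step Φ Δ E (stage Φ Δ E (m + 1)) = none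
    rw [this]
    exact hm
  intro m n h hm
  induction n with
  | zero => cases Nat.le_zero.mp h; exact hm
  | succ n ih =>
    rcases Nat.lt_or_ge m (n + 1) with h1 | h1
    · exact key n (ih (by omega))
    · have : m = n + 1 := by omega
      subst this; exact hm

/-- The constructed `DSeq`. -/
noncomputable def mySeq (Φ : Set Fml) (Δ : Set Default) (E : Set Fml) : DSeq := ⟨sf Φ Δ E, sf_dc Φ Δ E⟩

lemma consUpTo_succ (t : DSeq) (n : ℕ) :
    consUpTo t (n + 1) = consUpTo t n ∪ {χ | ∃ d, t.f n = some d ∧ χ = d.con} := by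
  ext χ
  simp only [consUpTo, Set.mem_setOf_eq, Set.mem_union]
  constructor
  · rintro ⟨i, hi, d, hd, hc⟩
    rcases Nat.lt_or_ge i n with h1 | h1
    · exact Or.inl ⟨i, h1, d, hd, hc⟩
    · have : i = n := by omega
      subst this
      exact Or.inr ⟨d, hd, hc.symm⟩
  · rintro (⟨i, hi, d, hd, hc⟩ | ⟨d, hd, hc⟩)
    · exact ⟨i, by omega, d, hd, hc⟩
    · exact ⟨n, by omega, d, hd, hc.symm⟩

lemma consUpTo_eq_stage (Φ : Set Fml) (Δ : Set Default) (E : Set Fml) (n : ℕ) : consUpTo (mySeq Φ Δ E) n = stage Φ Δ E n := by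
  induction n with
  | zero =>
    ext χ
    simp [consUpTo, stage]
  | succ n ih =>
    rw [consUpTo_succ, ih]
    rfl

lemma consAll_eq_iUnion (t : DSeq) : consAll t = ⋃ n, consUpTo t n := by
  ext χ
  simp only [consAll, Set.mem_setOf_eq, Set.mem_iUnion]
  constructor
  · rintro ⟨i, d, hd, hc⟩
    exact ⟨i + 1, i, by omega, d, hd, hc⟩
  · rintro ⟨n, i, _, d, hd, hc⟩
    exact ⟨i, d, hd, hc⟩

lemma consUpTo_mono (t : DSeq) {m n : ℕ} (h : m ≤ n) : consUpTo t m ⊆ consUpTo t n := by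
  rintro χ ⟨i, hi, d, hd, hc⟩
  exact ⟨i, by omega, d, hd, hc⟩

end DAL
/-- Every Reiter extension arises from a closed generating sequence:
if E is a Reiter extension of Φ under the set Δ of normal defaults, then there is a
closed generating sequence s of defaults of Δ for Φ with E = Cn(Φ ∪ Cons_s). -/
theorem DAL.extension_has_closed_generating_sequence
    (Φ : Set DAL.Fml) (Δ : Set DAL.Default) (hΔ : ∀ d ∈ Δ, d.Normal)
    (E : Set DAL.Fml) (hE : DAL.IsExtension Φ Δ E) :
    ∃ s : DAL.DSeq, DAL.ClosedGen Φ Δ s ∧ E = DAL.Cn (Φ ∪ DAL.consAll s) := by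
  classical
  obtain ⟨EΦ, Ecn, Ecl⟩ : E ∈ Fam Φ Δ E := by
    have h := gammaSet_mem_fam Φ Δ E
    rwa [← hE] at h
  have Emin : ∀ X ∈ Fam Φ Δ E, E ⊆ X := by
    intro X hX
    have h := gammaSet_subset hX
    rwa [← hE] at h
  have hCnE : Cn E ⊆ E := Ecn.symm.subset
  by_cases hc : Consistent E
  case neg =>
    -- E is inconsistent: E = univ, Φ is inconsistent, and the empty sequence works.
    have hEuniv : E = Set.univ := by
      apply Set.eq_univ_of_forall
      intro p
      exact hCnE (mem_cn.mpr (deriv_of_not_consistent hc p))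
    have hCnΦfam : Cn Φ ∈ Fam Φ Δ E := by
      refine ⟨subset_cn, cn_cn.symm, ?_⟩
      intro d hd hpre hjus
      exact absurd (by rw [hEuniv]; trivial) hjus
    have hEC : Cn Φ = Set.univ :=
      Set.eq_univ_of_univ_subset (hEuniv ▸ Emin _ hCnΦfam)
    refine ⟨⟨fun _ => none, fun _ _ _ h => h⟩, ⟨?_, ?_⟩, ?_⟩
    · intro i d h
      cases h
    · rintro t ht ⟨hext, m, _, htm⟩
      obtain ⟨d, htd⟩ := Option.ne_none_iff_exists'.mp htm
      apply (ht m d htd).2.2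
      apply Deriv.prov
      apply deriv_mono (Set.subset_union_left)
      exact mem_cn.mp (by rw [hEC]; trivial)
    · have h0 : consAll ⟨fun _ => none, fun _ _ _ h => h⟩ = (∅ : Set Fml) := by
        ext χ
        simp [consAll]
      rw [h0, Set.union_empty, hEC, hEuniv]
  case pos =>
    -- E is consistent: use the constructed sequence `mySeq Φ Δ E`.
    have hstageE : ∀ n, stage Φ Δ E n ⊆ E := by
      intro n
      induction n with
      | zero => rw [stage_zero]; exact Set.empty_subset E
      | succ n ih =>
        rw [stage_succ]
        rintro χ (hχ | ⟨d, hd, rfl⟩)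
        · exact ih hχ
        · obtain ⟨hdΔ, hpre, hnc⟩ := step_some_app Φ Δ E hd
          have hpreE : d.pre ∈ E :=
            hCnE (mem_cn.mpr (deriv_mono (Set.union_subset EΦ ih) hpre.deriv))
          have hjus : Fml.neg d.jus ∉ E := by rw [hΔ d hdΔ]; exact hnc
          exact Ecl d hdΔ hpreE hjus
    have hconsAll : consAll (mySeq Φ Δ E) = ⋃ n, stage Φ Δ E n := by
      rw [consAll_eq_iUnion]
      exact Set.iUnion_congr (consUpTo_eq_stage Φ Δ E)
    have hconsAllE : Φ ∪ consAll (mySeq Φ Δ E) ⊆ E := by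
      rw [hconsAll]
      exact Set.union_subset EΦ (Set.iUnion_subset hstageE)
    have hTE : Cn (Φ ∪ consAll (mySeq Φ Δ E)) ⊆ E := (cn_mono hconsAllE).trans hCnE
    have hTfam : Cn (Φ ∪ consAll (mySeq Φ Δ E)) ∈ Fam Φ Δ E := by
      refine ⟨(Set.subset_union_left).trans subset_cn, cn_cn.symm, ?_⟩
      intro d hdΔ hpre hjus
      have hnc : Fml.neg d.con ∉ E := by rw [← hΔ d hdΔ]; exact hjus
      by_cases hcon : d.con ∈ Φ ∪ consAll (mySeq Φ Δ E)
      · exact subset_cn hcon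
      · exfalso
        have hfresh : ∀ m, d.con ∉ stage Φ Δ E m := by
          intro m hm
          exact hcon (Or.inr (by rw [hconsAll]; exact Set.mem_iUnion.mpr ⟨m, hm⟩))
        have hUnion : Φ ∪ consAll (mySeq Φ Δ E) = ⋃ n, (Φ ∪ stage Φ Δ E n) := by
          rw [hconsAll, Set.union_iUnion]
        obtain ⟨n, hn⟩ := deriv_chain (C := fun n => Φ ∪ stage Φ Δ E n)
          (fun m n h => Set.union_subset_union_right Φ (stage_mono Φ Δ E h))
          (by rw [← hUnion]; exact mem_cn.mp hpre)
        have hpick : ∀ m, ∃ e, n ≤ m → sf Φ Δ E m = some e ∧ e.con ∉ stage Φ Δ E m ∧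
            e.con ∈ stage Φ Δ E (m + 1) ∧ encD e < encD d := by
          intro m
          by_cases hm : n ≤ m
          · have hAppd : App Φ Δ E (stage Φ Δ E m) d :=
              ⟨hdΔ, Deriv.prov (deriv_mono
                (Set.union_subset_union_right Φ (stage_mono Φ Δ E hm)) hn), hnc⟩
            obtain ⟨e, he1, he2, he3, he4⟩ := step_fresh Φ Δ E ⟨d, hAppd, hfresh m⟩
            refine ⟨e, fun _ => ⟨he1, he3, ?_, ?_⟩⟩
            · rw [stage_succ]
              exact Or.inr ⟨e, he1, rfl⟩
            · have hle : encD e ≤ encD d := he4 d hAppd (hfresh m)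
              have hne : e ≠ d := by
                rintro rfl
                exact hfresh (m + 1) (by rw [stage_succ]; exact Or.inr ⟨e, he1, rfl⟩)
              exact lt_of_le_of_ne hle fun hh => hne (encD_inj hh)
          · exact ⟨d, fun h => absurd h hm⟩
        choose g hg using hpick
        have hmaps : ∀ m ∈ Finset.Icc n (n + encD d),
            encD (g m) ∈ Finset.range (encD d) := by
          intro m hm
          simp only [Finset.mem_Icc] at hm
          exact Finset.mem_range.mpr (hg m hm.1).2.2.2
        have hinj : Set.InjOn (fun m => encD (g m)) (Finset.Icc n (n + encD d)) := by
          intro a ha b hb hab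
          simp only [Finset.coe_Icc, Set.mem_Icc] at ha hb
          have hgeq : g a = g b := encD_inj hab
          rcases lt_trichotomy a b with h1 | h1 | h1
          · exfalso
            have h2 := (hg b hb.1).2.1
            rw [← hgeq] at h2
            exact h2 (stage_mono Φ Δ E (by omega) (hg a ha.1).2.2.1)
          · exact h1
          · exfalso
            have h2 := (hg a ha.1).2.1
            rw [hgeq] at h2
            exact h2 (stage_mono Φ Δ E (by omega) (hg b hb.1).2.2.1)
        have hcard := Finset.card_le_card_of_injOn _ hmaps hinj
        rw [Nat.card_Icc, Finset.card_range] at hcard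
        omega
    have hEeq : E = Cn (Φ ∪ consAll (mySeq Φ Δ E)) :=
      Set.Subset.antisymm (Emin _ hTfam) hTE
    refine ⟨mySeq Φ Δ E, ⟨?_, ?_⟩, hEeq⟩
    · -- generating
      intro i d hsd
      obtain ⟨hdΔ, hpre, _⟩ := step_some_app Φ Δ E (C := stage Φ Δ E i) hsd
      refine ⟨hdΔ, ?_, ?_⟩
      · rw [consUpTo_eq_stage]
        exact hpre
      · apply consistent_mono _ hc
        rw [consUpTo_eq_stage]
        exact Set.union_subset EΦ (hstageE (i + 1))
    · -- closed
      rintro t ht ⟨hext, n₀, hs0, ht0⟩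
      have hPex : ∃ m, sf Φ Δ E m = none := ⟨n₀, hs0⟩
      have hnone : sf Φ Δ E (Nat.find hPex) = none := Nat.find_spec hPex
      set n := Nat.find hPex with hndef
      have hmin : ∀ m, m < n → sf Φ Δ E m ≠ none := fun m hm => Nat.find_min hPex hm
      have hnn0 : n ≤ n₀ := Nat.find_min' hPex hs0
      have htn : t.f n ≠ none := fun h => ht0 (t.dc n n₀ hnn0 h)
      obtain ⟨d, htd⟩ := Option.ne_none_iff_exists'.mp htn
      have hcut : consUpTo t n = stage Φ Δ E n := by
        rw [← consUpTo_eq_stage Φ Δ E n]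
        ext χ
        simp only [consUpTo, Set.mem_setOf_eq]
        constructor
        · rintro ⟨i, hi, e, he, hc⟩
          obtain ⟨e', he'⟩ := Option.ne_none_iff_exists'.mp (hmin i hi)
          have h2 : t.f i = some e' := hext i e' he'
          rw [he] at h2
          obtain rfl : e = e' := Option.some.inj h2
          exact ⟨i, hi, e, he', hc⟩
        · rintro ⟨i, hi, e, he, hc⟩
          exact ⟨i, hi, e, hext i e he, hc⟩
      obtain ⟨hdΔ, hpre, hcons⟩ := ht n d htd
      rw [hcut] at hpre
      have hconsub : consAll (mySeq Φ Δ E) ⊆ stage Φ Δ E n := by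
        rintro χ ⟨i, e, he, hc⟩
        have hin : i < n := by
          by_contra h
          push_neg at h
          have he2 : sf Φ Δ E i = some e := he
          rw [sf_dc Φ Δ E n i h hnone] at he2
          cases he2
        rw [← consUpTo_eq_stage]
        exact ⟨i, hin, e, he, hc⟩
      have hnc : Fml.neg d.con ∉ E := by
        intro hmem
        rw [hEeq] at hmem
        have hd1 : Deriv (Φ ∪ consUpTo t (n + 1)) (Fml.neg d.con) := by
          refine deriv_mono ?_ (mem_cn.mp hmem)
          refine Set.union_subset_union_right Φ (hconsub.trans ?_)
          rw [← hcut]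
          exact consUpTo_mono t (by omega)
        have hd2 : Deriv (Φ ∪ consUpTo t (n + 1)) d.con :=
          .mem (Or.inr ⟨n, by omega, d, htd, rfl⟩)
        exact (not_consistent_of_contra hd2 hd1) hcons
      exact step_ne_none Φ Δ E ⟨hdΔ, hpre, hnc⟩ hnone
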